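/- The Steiner point S and the Tarry point T of a triangle ABC are diametrically opposite on the circumscribed circle of ABC. -/

import Mathlib

open EuclideanGeometry Real Affine
open scoped RealInnerProductSpace

noncomputable section

abbrev Pt := EuclideanSpace ℝ (Fin 2)

/-- The Steiner point `S` and the Tarry point `T` of a (non-equilateral) triangle
`ABC` are diametrically opposite on the circumcircle: `O` is the midpoint of `ST`. -/
theorem stmt_17 (A B C O K A₁ B₁ C₁ T S : Pt)
    (hABC : AffineIndependent ℝ ![A, B, C])
    (hK : (dist B C) ^ 2 • (A -ᵥ K) + (dist C A) ^ 2 • (B -ᵥ K) + (dist A B) ^ 2 • (C -ᵥ K)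
          = (0 : Pt))
    (hA₁ : A₁ ∈ AffineSubspace.perpBisector B C) (hA₁p : ∃ t : ℝ, K -ᵥ A₁ = t • (B -ᵥ C))
    (hB₁ : B₁ ∈ AffineSubspace.perpBisector C A) (hB₁p : ∃ t : ℝ, K -ᵥ B₁ = t • (C -ᵥ A))
    (hC₁ : C₁ ∈ AffineSubspace.perpBisector A B) (hC₁p : ∃ t : ℝ, K -ᵥ C₁ = t • (A -ᵥ B))
    (hO1 : dist O A = dist O B) (hO2 : dist O B = dist O C)
    (hKO : K ≠ O)
    (hT1 : inner ℝ (T -ᵥ A) (B₁ -ᵥ C₁) = (0 : ℝ))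
    (hT2 : inner ℝ (T -ᵥ B) (C₁ -ᵥ A₁) = (0 : ℝ))
    (hT3 : inner ℝ (T -ᵥ C) (A₁ -ᵥ B₁) = (0 : ℝ))
    (hS1 : ∃ t : ℝ, S -ᵥ A = t • (B₁ -ᵥ C₁))
    (hS2 : ∃ t : ℝ, S -ᵥ B = t • (C₁ -ᵥ A₁))
    (hS3 : ∃ t : ℝ, S -ᵥ C = t • (A₁ -ᵥ B₁)) :
    O = midpoint ℝ S T := by
  -- At each vertex, the segment to `T` is perpendicular to the segment to `S`,
  -- so `A`, `B`, `C` all lie on the circle with diameter `ST`.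
  obtain ⟨ta, hta⟩ := hS1
  obtain ⟨tb, htb⟩ := hS2
  obtain ⟨tc, htc⟩ := hS3
  have h1 : ⟪T -ᵥ A, S -ᵥ A⟫ = (0:ℝ) := by rw [hta, inner_smul_right, hT1, mul_zero]
  have h2 : ⟪T -ᵥ B, S -ᵥ B⟫ = (0:ℝ) := by rw [htb, inner_smul_right, hT2, mul_zero]
  have h3 : ⟪T -ᵥ C, S -ᵥ C⟫ = (0:ℝ) := by rw [htc, inner_smul_right, hT3, mul_zero]
  set M := midpoint ℝ S T with hM
  -- the midpoint of `ST` is equidistant from any point seeing `ST` at a right angle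
  have key : ∀ X : Pt, ⟪T -ᵥ X, S -ᵥ X⟫ = (0:ℝ) → dist M X = dist S T / 2 := by
    intro X hX
    have hm : M -ᵥ X = (2:ℝ)⁻¹ • ((S -ᵥ X) + (T -ᵥ X)) := by
      rw [hM, midpoint, AffineMap.lineMap_apply]
      simp [vadd_vsub_assoc, vsub_sub_vsub_cancel_right]
      module
    have h := hX
    rw [real_inner_comm] at h
    have hsq : ‖(S -ᵥ X) + (T -ᵥ X)‖ ^ 2 = ‖(S -ᵥ X) - (T -ᵥ X)‖ ^ 2 := by
      rw [norm_add_sq_real, norm_sub_sq_real, h]; ring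
    have hn : ‖(S -ᵥ X) + (T -ᵥ X)‖ = ‖(S -ᵥ X) - (T -ᵥ X)‖ :=
      (sq_eq_sq₀ (norm_nonneg _) (norm_nonneg _)).mp hsq
    rw [dist_eq_norm_vsub, hm, norm_smul, hn, dist_eq_norm_vsub,
      ← vsub_sub_vsub_cancel_right S T X]
    simp; ring
  -- Both `O` and `M` are equidistant from the affinely independent points `A`, `B`, `C`,
  -- hence both equal the circumcenter.
  set s : Simplex ℝ Pt 2 := ⟨![A, B, C], hABC⟩ with hs
  have htop : affineSpan ℝ (Set.range s.points) = ⊤ := by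
    rw [hABC.affineSpan_eq_top_iff_card_eq_finrank_add_one]
    simp [finrank_euclideanSpace]
  have hOc : O = s.circumcenter := by
    refine s.eq_circumcenter_of_dist_eq (htop ▸ AffineSubspace.mem_top ℝ _ O) (r := dist O A) ?_
    intro i
    fin_cases i
    · simp [hs, dist_comm]
    · simp [hs]; rw [dist_comm, ← hO1]
    · simp [hs]; rw [dist_comm, ← hO2, ← hO1]
  have hMc : M = s.circumcenter := by
    refine s.eq_circumcenter_of_dist_eq (htop ▸ AffineSubspace.mem_top ℝ _ M) (r := dist S T / 2) ?_
    intro i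
    fin_cases i
    · simp only [hs]; rw [dist_comm]; exact key A h1
    · simp only [hs]; rw [dist_comm]; exact key B h2
    · simp only [hs]; rw [dist_comm]; exact key C h3
  rw [hOc, ← hMc]
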